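/- Suppose m₁,m₂,n₁,n₂,p₁,p₂,q₁,q₂ are nonnegative integers and r₁,r₂,s₁,s₂ are positive integers, and suppose the matrices A₁ and A₂ commute. If p₁ > m₁ and p₁ > n₁, then p₂ > m₂ and p₂ > n₂. -/
import Mathlib


/-- Direct 3-vertex form of Theorem 4.2 (Appendix A): if the vertex matrices of a dumbbell
2-graph with three components commute, all off-diagonal bridge entries `r_i, s_i` are
positive, and `p₁` dominates `m₁` and `n₁`, then `p₂` dominates `m₂` and `n₂`. -/
theorem dumbbell_three_components (m₁ m₂ n₁ n₂ p₁ p₂ q₁ q₂ r₁ r₂ s₁ s₂ : ℤ)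
    (hm₁ : 0 ≤ m₁) (hm₂ : 0 ≤ m₂) (hn₁ : 0 ≤ n₁) (hn₂ : 0 ≤ n₂)
    (hp₁ : 0 ≤ p₁) (hp₂ : 0 ≤ p₂) (hq₁ : 0 ≤ q₁) (hq₂ : 0 ≤ q₂)
    (hr₁ : 0 < r₁) (hr₂ : 0 < r₂) (hs₁ : 0 < s₁) (hs₂ : 0 < s₂)
    (hcomm : !![m₁, q₁, r₁; 0, n₁, s₁; 0, 0, p₁] * !![m₂, q₂, r₂; 0, n₂, s₂; 0, 0, p₂] =
      !![m₂, q₂, r₂; 0, n₂, s₂; 0, 0, p₂] * !![m₁, q₁, r₁; 0, n₁, s₁; 0, 0, p₁])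
    (h₁ : p₁ > m₁) (h₂ : p₁ > n₁) :
    p₂ > m₂ ∧ p₂ > n₂ := by
  have e01 := congrFun (congrFun hcomm 0) 1
  have e02 := congrFun (congrFun hcomm 0) 2
  have e12 := congrFun (congrFun hcomm 1) 2
  simp [Matrix.mul_apply, Fin.sum_univ_three] at e01 e02 e12
  -- e12 : n₁*s₂ + s₁*p₂ = n₂*s₁ + s₂*p₁ (up to ordering)
  have hn : p₂ > n₂ := by nlinarith [mul_pos hs₂ (sub_pos.mpr h₂)]
  refine ⟨?_, hn⟩
  -- key identity: (p₂-m₂)*(r₁*(p₁-n₁)+q₁*s₁) = (p₁-m₁)*(r₂*(p₁-n₁)+q₂*s₁)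
  have key : (p₂ - m₂) * (r₁ * (p₁ - n₁) + q₁ * s₁)
      = (p₁ - m₁) * (r₂ * (p₁ - n₁) + q₂ * s₁) := by nlinarith [e01, e02, e12, mul_self_nonneg (p₁ - n₁)]
  have hpos : 0 < r₁ * (p₁ - n₁) + q₁ * s₁ := by nlinarith [mul_pos hr₁ (sub_pos.mpr h₂), mul_nonneg hq₁ hs₁.le]
  have hrhs : 0 < (p₁ - m₁) * (r₂ * (p₁ - n₁) + q₂ * s₁) :=
    mul_pos (sub_pos.mpr h₁)
      (by nlinarith [mul_pos hr₂ (sub_pos.mpr h₂), mul_nonneg hq₂ hs₁.le])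
  nlinarith [key, hpos, hrhs]
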